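/- Let a > 0 and 0 < t < a (the subcritical regime, r = 1), and let x_L := (8a² + 20at − t² − √t·(8a+t)^{3/2})/(8a) > 0 be the left edge of the support. Then the limit C₁(t,a) := lim_{x → x_L⁺} ρ(x;1,t,a)/√(x − x_L) exists, is finite and positive, and satisfies lim_{t → a⁻} (a − t)^{5/2}·C₁(t,a) = 9a/(4π). That is, ρ(x;1,t,a) ≃ C₁(t,a)·(x − x_L)^{β₁} with β₁ = 1/2 as x → x_L⁺, and C₁(t,a) ≃ (9a/(4π))·(t_c(a) − t)^{−γ₁} with γ₁ = 5/2 as t → t_c(a)⁻ = a⁻. -/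

import Mathlib

open Filter Topology

set_option linter.unusedSectionVars false
set_option maxHeartbeats 1000000

/-- The real cube root. -/
noncomputable def cbrt (y : ℝ) : ℝ :=
  if 0 ≤ y then y ^ ((1 : ℝ)/3) else -((-y) ^ ((1 : ℝ)/3))

/-- The cubic polynomial `S(x; r, t, a)`. -/
noncomputable def S (x r t a : ℝ) : ℝ :=
  4*a*x^3 - (8*a^2 + 4*a*(3*r+2)*t - t^2)*x^2
    + 2*(2*a^3 - 2*a^2*(5*r-2)*t + a*(r*(6*r-1)+1)*t^2 - (r+1)*t^3)*x
    + (r-1)^2*t^2*(a^2 - a*(4*r-2)*t + t^2)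

/-- The function `g(x; r, t, a)`. -/
noncomputable def g (x r t a : ℝ) : ℝ :=
  -2*x^3 + 3*((2*r+1)*t + 6*a)*x^2
    - 3*((r-1)*((2*r+1)*t - 3*a)*t - Real.sqrt (-3 * S x r t a))*x
    + 2*(r-1)^3*t^3

/-- The function `φ(x; r, t, a)`. -/
noncomputable def phi (x r t a : ℝ) : ℝ :=
  -(2/3)*(x - (r-1)*t)
    - (cbrt 2 / 3) * ((x^2 + (3*a - (2*r+1)*t)*x + (r-1)^2*t^2) / cbrt (g x r t a))
    - cbrt (g x r t a) / (3 * cbrt 2)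

/-- The function `D(x; r, t, a) = -4aφ + (t-a)²`. -/
noncomputable def Df (x r t a : ℝ) : ℝ := -4*a*phi x r t a + (t-a)^2

/-- The three-parametric Marcenko–Pastur density `ρ(x; r, t, a)`. -/
noncomputable def rho (x r t a : ℝ) : ℝ :=
  Real.sqrt (2*(t - a + Real.sqrt (Df x r t a))*x - (phi x r t a)^2)
    / (2*Real.pi*r*t*x)

/-- The real part `R(x; r, t, a)` of the boundary value of the Green's function. -/
noncomputable def Rf (x r t a : ℝ) : ℝ :=
  (2*x + (r-1)*t)/(3*r*t*x)
    - (x^2 + (3*a - (2*r+1)*t)*x + (r-1)^2*t^2) / (3 * (cbrt 2)^2 * r * t * cbrt (g x r t a) * x)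
    - cbrt (g x r t a) / (6 * cbrt 2 * r * t * x)

/- ### auxiliary development -/

lemma cbrt_cube (y : ℝ) : (cbrt y)^3 = y := by
  unfold cbrt
  split_ifs with h
  · rw [← Real.rpow_natCast (y ^ ((1:ℝ)/3)) 3, ← Real.rpow_mul h]
    norm_num
  · rw [neg_pow, ← Real.rpow_natCast ((-y) ^ ((1:ℝ)/3)) 3, ← Real.rpow_mul (by linarith)]
    norm_num

lemma cbrt_pos {y : ℝ} (hy : 0 < y) : 0 < cbrt y := by
  unfold cbrt
  rw [if_pos hy.le]
  exact Real.rpow_pos_of_pos hy _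

lemma cbrt_eq_of_cube {c y : ℝ} (hc : 0 ≤ c) (h : c^3 = y) : cbrt y = c := by
  have hy : 0 ≤ y := by rw [← h]; positivity
  unfold cbrt
  rw [if_pos hy, ← h, ← Real.rpow_natCast c 3, ← Real.rpow_mul hc]
  norm_num

lemma continuousAt_cbrt {y : ℝ} (hy : 0 < y) : ContinuousAt cbrt y := by
  have h1 : ContinuousAt (fun z : ℝ => z ^ ((1:ℝ)/3)) y :=
    Real.continuousAt_rpow_const y _ (Or.inl hy.ne')
  apply h1.congr
  filter_upwards [eventually_gt_nhds hy] with z hz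
  unfold cbrt
  rw [if_pos hz.le]

noncomputable def xlo (a t : ℝ) : ℝ :=
  (8*a^2 + 20*a*t - t^2 - Real.sqrt t * (8*a+t) ^ ((3:ℝ)/2))/(8*a)
noncomputable def xro (a t : ℝ) : ℝ :=
  (8*a^2 + 20*a*t - t^2 + Real.sqrt t * (8*a+t) ^ ((3:ℝ)/2))/(8*a)
noncomputable def Cc (a t : ℝ) : ℝ :=
  Real.sqrt (4*a*(xlo a t)^3*(xro a t - xlo a t))
    / (2*Real.pi*t*(xlo a t)*((xlo a t)^2 + (3*a-3*t)*(xlo a t)))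

section base
variable {a t : ℝ} (ha : 0 < a) (ht : 0 < t) (hta : t < a)
include ha ht hta

lemma hw2 : (Real.sqrt t * (8*a+t) ^ ((3:ℝ)/2))^2 = t*(8*a+t)^3 := by
  have h8 : (0:ℝ) ≤ 8*a+t := by linarith
  have h1 : (Real.sqrt t)^2 = t := Real.sq_sqrt ht.le
  have h2 : (((8*a+t) : ℝ) ^ ((3:ℝ)/2))^2 = (8*a+t)^3 := by
    rw [← Real.rpow_natCast ((8*a+t) ^ ((3:ℝ)/2)) 2, ← Real.rpow_mul h8,
      show ((3:ℝ)/2 * (2:ℕ)) = ((3:ℕ):ℝ) by norm_num, Real.rpow_natCast]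
  rw [mul_pow, h1, h2]

lemma hwpos : 0 < Real.sqrt t * (8*a+t) ^ ((3:ℝ)/2) := by
  have h8 : (0:ℝ) < 8*a+t := by linarith
  exact mul_pos (Real.sqrt_pos.2 ht) (Real.rpow_pos_of_pos h8 _)

lemma hPpos : 0 < 8*a^2 + 20*a*t - t^2 := by nlinarith

lemma hwP : Real.sqrt t * (8*a+t) ^ ((3:ℝ)/2) < 8*a^2 + 20*a*t - t^2 := by
  have h2 := hw2 ha ht hta
  have h0 := (hwpos ha ht hta).le
  have hP := hPpos ha ht hta
  by_contra hcon
  push_neg at hcon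
  have : (8*a^2 + 20*a*t - t^2)^2 ≤ (Real.sqrt t * (8*a+t) ^ ((3:ℝ)/2))^2 :=
    pow_le_pow_left₀ hP.le hcon 2
  nlinarith [mul_pos (mul_pos ha (sub_pos.2 hta)) (mul_pos (sub_pos.2 hta) (sub_pos.2 hta))]

lemma xlo_pos : 0 < xlo a t := by
  have := hwP ha ht hta
  unfold xlo
  apply div_pos (by linarith) (by linarith)

lemma xlo_lt_xro : xlo a t < xro a t := by
  have h1 := hwpos ha ht hta
  have h8 : (0:ℝ) < 8*a := by linarith
  unfold xlo xro
  rw [div_lt_div_iff₀ h8 h8]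
  nlinarith

lemma xsum : 4*a*(xlo a t + xro a t) = 8*a^2 + 20*a*t - t^2 := by
  unfold xlo xro; field_simp; ring

lemma xprod : a*(xlo a t * xro a t) = (a-t)^3 := by
  have h2 := hw2 ha ht hta
  unfold xlo xro
  generalize Real.sqrt t * (8*a+t) ^ ((3:ℝ)/2) = w at h2 ⊢
  field_simp
  linear_combination (-1 : ℝ) * h2

end base

lemma part1 {a t : ℝ} (ha : 0 < a) (ht : 0 < t) (hta : t < a) :
    0 < Cc a t ∧
    Filter.Tendsto (fun x : ℝ => rho x 1 t a / Real.sqrt (x - xlo a t))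
      (nhdsWithin (xlo a t) (Set.Ioi (xlo a t))) (nhds (Cc a t)) := by
  have hπ := Real.pi_pos
  set L := xlo a t with hLdef
  set R := xro a t with hRdef
  have hL0 : 0 < L := xlo_pos ha ht hta
  have hLR : L < R := xlo_lt_xro ha ht hta
  have hR0 : 0 < R := hL0.trans hLR
  have hsum : 4*a*(L + R) = 8*a^2 + 20*a*t - t^2 := xsum ha ht hta
  have hprod : a*(L * R) = (a-t)^3 := xprod ha ht hta
  -- S factorization
  have hS : ∀ x : ℝ, S x 1 t a = 4*a*x*((x-L)*(x-R)) := by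
    intro x
    unfold S
    linear_combination (x^2)*hsum - (4*x)*hprod
  have hgrw : ∀ x : ℝ, g x 1 t a
      = -2*x^3 + (9*t+18*a)*x^2 + 3*x*Real.sqrt (-3*S x 1 t a) := by
    intro x; unfold g; ring
  have hgcont : Continuous (fun x : ℝ => g x 1 t a) := by
    unfold g S; fun_prop
  have hSL : S L 1 t a = 0 := by rw [hS]; ring
  have hgL : g L 1 t a = -2*L^3 + (9*t+18*a)*L^2 := by
    rw [hgrw, hSL]
    norm_num
  have hgLpos : 0 < g L 1 t a := by
    rw [hgL]
    have h2L : 2*L < 9*t+18*a := by nlinarith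
    nlinarith [mul_pos (mul_pos hL0 hL0) (sub_pos.2 h2L)]
  -- the square root of D0 at L
  have hD0Lpos : 0 < L^2 + (3*a-3*t)*L := by nlinarith
  set s := Real.sqrt (L^2 + (3*a-3*t)*L) with hsdef
  have hs2 : s^2 = L^2 + (3*a-3*t)*L := Real.sq_sqrt hD0Lpos.le
  have hspos : 0 < s := Real.sqrt_pos.2 hD0Lpos
  have hA : ∀ x : ℝ, (-2*x^3 + (9*t+18*a)*x^2)^2 - 4*(x^2+(3*a-3*t)*x)^3
      = -27*x^2*S x 1 t a := by
    intro x; unfold S; ring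
  have hD1L : -2*L^3 + (9*t+18*a)*L^2 = 2*s^3 := by
    have h := hA L
    rw [hSL] at h
    have hz : (-2*L^3 + (9*t+18*a)*L^2 - 2*s^3)*(-2*L^3 + (9*t+18*a)*L^2 + 2*s^3) = 0 := by
      linear_combination h + (-4*((L^2+(3*a-3*t)*L)^2 + (L^2+(3*a-3*t)*L)*s^2 + s^4))*hs2
    rcases mul_eq_zero.1 hz with h1 | h1
    · linarith
    · exfalso
      rw [hgL] at hgLpos
      nlinarith [pow_pos hspos 3]
  have hk3 : (cbrt 2)^3 = 2 := cbrt_cube 2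
  have hkpos : 0 < cbrt 2 := cbrt_pos (by norm_num)
  have hcbrtgL : cbrt (g L 1 t a) = cbrt 2 * s := by
    apply cbrt_eq_of_cube (by positivity)
    rw [mul_pow, hk3, hgL, hD1L]
  have hphiL : phi L 1 t a = -(2/3)*(L+s) := by
    unfold phi
    rw [hcbrtgL]
    have hkne := hkpos.ne'
    have hsne := hspos.ne'
    field_simp
    linear_combination hs2
  -- E function
  have hEL : 3*(phi L 1 t a)^2 + 4*L*(phi L 1 t a) + L^2 + (t-a)*L
      = L^2 + (3*a-3*t)*L := by
    rw [hphiL]; linear_combination (4/3)*hs2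
  have hNL : 0 < 2*(phi L 1 t a)^2 + 2*L*(phi L 1 t a) + (t-a)*L := by
    rw [hphiL]
    nlinarith [hs2, mul_pos hL0 hspos, mul_pos (sub_pos.2 hta) hL0]
  -- continuity of phi at L
  have hgcontL : ContinuousAt (fun x : ℝ => g x 1 t a) L := hgcont.continuousAt
  have hc1 : ContinuousAt (fun x : ℝ => cbrt (g x 1 t a)) L :=
    ContinuousAt.comp (g := cbrt) (continuousAt_cbrt hgLpos) hgcontL
  have hcLne : cbrt (g L 1 t a) ≠ 0 := by rw [hcbrtgL]; positivity
  have hphicont : ContinuousAt (fun x : ℝ => phi x 1 t a) L := by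
    unfold phi
    refine ContinuousAt.sub (ContinuousAt.sub (by fun_prop) ?_) ?_
    · exact continuousAt_const.mul
        (ContinuousAt.div (by fun_prop) hc1 hcLne)
    · exact ContinuousAt.div (by fun_prop) continuousAt_const (by positivity)
  have hEcont : ContinuousAt
      (fun x : ℝ => 3*(phi x 1 t a)^2 + 4*x*(phi x 1 t a) + x^2 + (t-a)*x) L := by
    fun_prop
  have hELpos : 0 < 3*(phi L 1 t a)^2 + 4*L*(phi L 1 t a) + L^2 + (t-a)*L := by
    rw [hEL]; exact hD0Lpos
  -- eventual equality with a nice closed form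
  have hNcont : ContinuousAt (fun x : ℝ => 2*(phi x 1 t a)^2 + 2*x*(phi x 1 t a) + (t-a)*x) L := by
    fun_prop
  have evAll : ∀ᶠ x in nhdsWithin L (Set.Ioi L),
      rho x 1 t a / Real.sqrt (x - L)
        = Real.sqrt (4*a*x^3*(R-x))
            / (2*Real.pi*t*x*(3*(phi x 1 t a)^2 + 4*x*(phi x 1 t a) + x^2 + (t-a)*x)) := by
    filter_upwards [eventually_mem_nhdsWithin,
      eventually_nhdsWithin_of_eventually_nhds (hgcontL.eventually (eventually_gt_nhds hgLpos)),
      eventually_nhdsWithin_of_eventually_nhds (hNcont.eventually (eventually_gt_nhds hNL)),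
      eventually_nhdsWithin_of_eventually_nhds (hEcont.eventually (eventually_gt_nhds hELpos)),
      eventually_nhdsWithin_of_eventually_nhds (eventually_lt_nhds hLR)]
      with x hx hgx hNx hEx hxR
    simp only [Set.mem_Ioi] at hx
    have hx0 : 0 < x := hL0.trans hx
    have hc3 : (cbrt (g x 1 t a))^3 = g x 1 t a := cbrt_cube _
    have hcpos : 0 < cbrt (g x 1 t a) := cbrt_pos hgx
    have hcne := hcpos.ne'
    have hkne := hkpos.ne'
    have hSneg : 0 ≤ -3*S x 1 t a := by
      have h1 : 0 ≤ 12*a*x*((x-L)*(R-x)) :=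
        mul_nonneg (by positivity) (mul_nonneg (by linarith) (by linarith))
      have h2 : -3*S x 1 t a = 12*a*x*((x-L)*(R-x)) := by rw [hS]; ring
      linarith
    have hq2 : (Real.sqrt (-3*S x 1 t a))^2 = -3*S x 1 t a := Real.sq_sqrt hSneg
    have hg2 : (g x 1 t a)^2 - 2*(-2*x^3+(9*t+18*a)*x^2)*(g x 1 t a)
        + 4*(x^2+(3*a-3*t)*x)^3 = 0 := by
      have h := hgrw x
      have h2 := hA x
      linear_combination (g x 1 t a - (-2*x^3+(9*t+18*a)*x^2)
        + 3*x*Real.sqrt (-3*S x 1 t a))*h + (9*x^2)*hq2 - h2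
    -- the Cardano cubic satisfied by phi
    have hphix : phi x 1 t a = -(2*x + ((cbrt 2)*(x^2+(3*a-3*t)*x)/(cbrt (g x 1 t a))
        + (cbrt (g x 1 t a))/(cbrt 2)))/3 := by
      unfold phi; field_simp; ring
    have e1 : ((cbrt 2)*(x^2+(3*a-3*t)*x)/(cbrt (g x 1 t a)) + (cbrt (g x 1 t a))/(cbrt 2))^3
        = (cbrt 2)^3*(x^2+(3*a-3*t)*x)^3/(cbrt (g x 1 t a))^3 + (cbrt (g x 1 t a))^3/(cbrt 2)^3
          + 3*(x^2+(3*a-3*t)*x)*((cbrt 2)*(x^2+(3*a-3*t)*x)/(cbrt (g x 1 t a))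
            + (cbrt (g x 1 t a))/(cbrt 2)) := by
      field_simp; ring
    rw [hc3, hk3] at e1
    have e2 : 2*(x^2+(3*a-3*t)*x)^3/(g x 1 t a) + (g x 1 t a)/2
        = -2*x^3+(9*t+18*a)*x^2 := by
      rw [div_add_div _ _ hgx.ne' (two_ne_zero), div_eq_iff (by positivity)]
      linear_combination hg2
    rw [e2] at e1
    have hcubic : (phi x 1 t a)^3 + 2*x*(phi x 1 t a)^2
        + (x^2+(t-a)*x)*(phi x 1 t a) + t*x^2 = 0 := by
      rw [hphix]
      linear_combination (-(1:ℝ)/27)*e1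
    -- the square root of Df
    have hDfval : Df x 1 t a * x^2
        = (2*(phi x 1 t a)^2 + 2*x*(phi x 1 t a) + (t-a)*x)^2 := by
      unfold Df
      linear_combination (-4*(phi x 1 t a))*hcubic
    have hsqrtDf : Real.sqrt (Df x 1 t a)
        = (2*(phi x 1 t a)^2 + 2*x*(phi x 1 t a) + (t-a)*x)/x := by
      have hDf : Df x 1 t a = ((2*(phi x 1 t a)^2 + 2*x*(phi x 1 t a) + (t-a)*x)/x)^2 := by
        rw [div_pow, eq_div_iff (by positivity)]
        linear_combination hDfval
      rw [hDf, Real.sqrt_sq (by positivity)]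
    have hQ : 2*(t - a + Real.sqrt (Df x 1 t a))*x - (phi x 1 t a)^2
        = 3*(phi x 1 t a)^2 + 4*x*(phi x 1 t a) + 4*(t-a)*x := by
      rw [hsqrtDf]; field_simp; ring
    have hQE : (3*(phi x 1 t a)^2 + 4*x*(phi x 1 t a) + 4*(t-a)*x)
        * (3*(phi x 1 t a)^2 + 4*x*(phi x 1 t a) + x^2 + (t-a)*x)^2
        = 4*a*x^3*((x-L)*(R-x)) := by
      have h := hS x
      have hU : S x 1 t a = 4*a*x^3 - (8*a^2+20*a*t-t^2)*x^2
          + (4*a^3-12*a^2*t+12*a*t^2-4*t^3)*x := by unfold S; ring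
      linear_combination (27*(phi x 1 t a)^3 + 54*(phi x 1 t a)^2*x
        + 27*(phi x 1 t a)*x^2 + 27*(phi x 1 t a)*x*t - 27*(phi x 1 t a)*x*a
        + 4*x^3 + 9*x^2*t - 36*x^2*a)*hcubic + (-x^2)*h + (x^2)*hU
    have hval : 2*(t - a + Real.sqrt (Df x 1 t a))*x - (phi x 1 t a)^2
        = (x-L)*(4*a*x^3*(R-x)
            /(3*(phi x 1 t a)^2 + 4*x*(phi x 1 t a) + x^2 + (t-a)*x)^2) := by
      rw [hQ, eq_comm, mul_div_assoc', div_eq_iff (pow_ne_zero 2 hEx.ne')]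
      linear_combination -hQE
    unfold rho
    rw [hval, Real.sqrt_mul (by linarith : (0:ℝ) ≤ x - L),
      Real.sqrt_div (mul_nonneg (by positivity) (by linarith : (0:ℝ) ≤ R - x)) _,
      Real.sqrt_sq hEx.le]
    have hsL : Real.sqrt (x - L) ≠ 0 := by
      rw [Real.sqrt_ne_zero']; linarith
    field_simp
  -- continuity of the closed form at L
  have hFcont : ContinuousAt (fun x : ℝ => Real.sqrt (4*a*x^3*(R-x))
      / (2*Real.pi*t*x*(3*(phi x 1 t a)^2 + 4*x*(phi x 1 t a) + x^2 + (t-a)*x))) L := by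
    apply ContinuousAt.div
    · exact (Real.continuous_sqrt.comp (by fun_prop)).continuousAt
    · exact ContinuousAt.mul (by fun_prop) hEcont
    · exact ne_of_gt (by positivity)
  have hFL : Real.sqrt (4*a*L^3*(R-L))
      / (2*Real.pi*t*L*(3*(phi L 1 t a)^2 + 4*L*(phi L 1 t a) + L^2 + (t-a)*L)) = Cc a t := by
    rw [hEL]
    rfl
  constructor
  · rw [← hFL, hEL]
    have hnum : 0 < 4*a*L^3*(R-L) := mul_pos (by positivity) (by linarith)
    exact div_pos (Real.sqrt_pos.2 hnum) (mul_pos (by positivity) hD0Lpos)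
  · have hT : Filter.Tendsto (fun x : ℝ => Real.sqrt (4*a*x^3*(R-x))
        / (2*Real.pi*t*x*(3*(phi x 1 t a)^2 + 4*x*(phi x 1 t a) + x^2 + (t-a)*x)))
        (nhdsWithin L (Set.Ioi L)) (nhds (Cc a t)) := by
      rw [← hFL]
      exact hFcont.continuousWithinAt
    exact hT.congr' (evAll.mono fun x hx => hx.symm)



lemma wf_sq {a t : ℝ} (ha : 0 < a) (ht : 0 < t) :
    (Real.sqrt t * (8*a+t) ^ ((3:ℝ)/2))^2 = t*(8*a+t)^3 := by
  have h8 : (0:ℝ) ≤ 8*a+t := by linarith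
  have h1 : (Real.sqrt t)^2 = t := Real.sq_sqrt ht.le
  have h2 : (((8*a+t) : ℝ) ^ ((3:ℝ)/2))^2 = (8*a+t)^3 := by
    rw [← Real.rpow_natCast ((8*a+t) ^ ((3:ℝ)/2)) 2, ← Real.rpow_mul h8,
      show ((3:ℝ)/2 * (2:ℕ)) = ((3:ℕ):ℝ) by norm_num, Real.rpow_natCast]
  rw [mul_pow, h1, h2]

lemma part2 {a : ℝ} (ha : 0 < a) :
    Filter.Tendsto (fun t : ℝ => (a - t) ^ ((5:ℝ)/2) * Cc a t)
      (nhdsWithin a (Set.Ioo 0 a)) (nhds (9*a/(4*Real.pi))) := by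
  have hπ := Real.pi_pos
  set Wf : ℝ → ℝ := fun t => 8*a^2 + 20*a*t - t^2 + Real.sqrt t * (8*a+t) ^ ((3:ℝ)/2)
    with hWfdef
  set h : ℝ → ℝ := fun t => a*(xro a t - xlo a t)*(Wf t)^3
      /(8*Real.pi^2*t^2*(8*(a-t)^2+3*Wf t)^2) with hhdef
  have hWa : Wf a = 54*a^2 := by
    have hsq : (Real.sqrt a * (8*a+a) ^ ((3:ℝ)/2))^2 = (27*a^2)^2 := by
      rw [wf_sq ha ha]; ring
    have hpos : 0 ≤ Real.sqrt a * (8*a+a) ^ ((3:ℝ)/2) := by positivity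
    have h27 : Real.sqrt a * (8*a+a) ^ ((3:ℝ)/2) = 27*a^2 := by
      have hz : (Real.sqrt a * (8*a+a) ^ ((3:ℝ)/2) - 27*a^2)
          * (Real.sqrt a * (8*a+a) ^ ((3:ℝ)/2) + 27*a^2) = 0 := by
        linear_combination hsq
      rcases mul_eq_zero.1 hz with h1 | h1
      · linarith
      · nlinarith [hpos, sq_nonneg a]
    simp only [hWfdef]
    rw [h27]; ring
  have hWcont : ContinuousAt Wf a := by
    apply ContinuousAt.add (by fun_prop)
    apply ContinuousAt.mul
    · exact Real.continuous_sqrt.continuousAt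
    · exact ContinuousAt.rpow_const (by fun_prop) (Or.inr (by norm_num))
  have hxlocont : ContinuousAt (xlo a) a := by
    unfold xlo
    apply ContinuousAt.div ?_ (by fun_prop) (by positivity)
    apply ContinuousAt.sub (by fun_prop)
    apply ContinuousAt.mul
    · exact Real.continuous_sqrt.continuousAt
    · exact ContinuousAt.rpow_const (by fun_prop) (Or.inr (by norm_num))
  have hxrocont : ContinuousAt (xro a) a := by
    unfold xro
    apply ContinuousAt.div ?_ (by fun_prop) (by positivity)
    apply ContinuousAt.add (by fun_prop)
    apply ContinuousAt.mul
    · exact Real.continuous_sqrt.continuousAt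
    · exact ContinuousAt.rpow_const (by fun_prop) (Or.inr (by norm_num))
  have hwa27 : Real.sqrt a * (8*a+a) ^ ((3:ℝ)/2) = 27*a^2 := by
    have := hWa
    simp only [hWfdef] at this
    linarith
  have hxloa : xlo a a = 0 := by unfold xlo; rw [hwa27]; field_simp; ring
  have hxroa : xro a a = 27*a/4 := by
    unfold xro; rw [hwa27]; field_simp; ring
  have hha : h a = (9*a/(4*Real.pi))^2 := by
    simp only [hhdef]
    rw [hWa, hxloa, hxroa]
    field_simp
    ring
  have hhcont : ContinuousAt h a := by
    simp only [hhdef]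
    apply ContinuousAt.div
    · exact (ContinuousAt.mul (continuousAt_const.mul (hxrocont.sub hxlocont))
        (hWcont.pow 3))
    · exact ContinuousAt.mul (by fun_prop) ((ContinuousAt.add (by fun_prop)
        (continuousAt_const.mul hWcont)).pow 2)
    · rw [hWa]; positivity
  have hT : Filter.Tendsto (fun t => Real.sqrt (h t))
      (nhdsWithin a (Set.Ioo 0 a)) (nhds (9*a/(4*Real.pi))) := by
    have : ContinuousAt (fun t => Real.sqrt (h t)) a :=
      ContinuousAt.comp (g := Real.sqrt) Real.continuous_sqrt.continuousAt hhcont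
    have h2 := this.continuousWithinAt (s := Set.Ioo 0 a)
    rw [ContinuousWithinAt] at h2
    rw [hha, Real.sqrt_sq (by positivity)] at h2
    exact h2
  apply hT.congr'
  filter_upwards [eventually_mem_nhdsWithin] with t htm
  obtain ⟨ht, hta⟩ := htm
  have hu : 0 < a - t := by linarith
  have hL0 := xlo_pos ha ht hta
  have hLR := xlo_lt_xro ha ht hta
  have hW0 : 0 < Wf t := by
    simp only [hWfdef]
    have := hwpos ha ht hta
    have := hPpos ha ht hta
    linarith
  have hxlW : xlo a t * Wf t = 8*(a-t)^3 := by
    have h2 := hw2 ha ht hta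
    simp only [hWfdef]
    unfold xlo
    generalize Real.sqrt t * (8*a+t) ^ ((3:ℝ)/2) = w at h2 ⊢
    field_simp
    linear_combination (-(1:ℝ)) * h2
  -- rewrite the left side as a single square root
  have h52 : (a-t) ^ ((5:ℝ)/2) = Real.sqrt ((a-t)^5) := by
    rw [Real.sqrt_eq_rpow, ← Real.rpow_natCast (a-t) 5, ← Real.rpow_mul hu.le]
    norm_num
  have hd0 : 0 < 2*Real.pi*t*(xlo a t)*((xlo a t)^2 + (3*a-3*t)*(xlo a t)) := by
    have : 0 < (xlo a t)^2 + (3*a-3*t)*(xlo a t) := by nlinarith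
    positivity
  have hA0 : 0 ≤ 4*a*(xlo a t)^3*(xro a t - xlo a t) :=
    mul_nonneg (by positivity) (by linarith)
  rw [h52]
  have key : (a-t)^5 * (4*a*(xlo a t)^3*(xro a t - xlo a t))
      * (8*Real.pi^2*t^2*(8*(a-t)^2+3*Wf t)^2)
      = (a*(xro a t - xlo a t)*(Wf t)^3)
      * (2*Real.pi*t*(xlo a t)*((xlo a t)^2 + (3*a-3*t)*(xlo a t)))^2 := by
    linear_combination (4*Real.pi^2*t^2*a*(xro a t - xlo a t)*(xlo a t)^3
      * (-((xlo a t)^2*(Wf t)^2 + 6*(xlo a t)*(Wf t)^2*(a-t)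
        + 8*(xlo a t)*(Wf t)*(a-t)^3 + 9*(Wf t)^2*(a-t)^2
        + 48*(Wf t)*(a-t)^4 + 64*(a-t)^6))) * hxlW
  have hfrac : (a-t)^5 * (4*a*(xlo a t)^3*(xro a t - xlo a t))
      / (2*Real.pi*t*(xlo a t)*((xlo a t)^2 + (3*a-3*t)*(xlo a t)))^2 = h t := by
    simp only [hhdef]
    rw [div_eq_div_iff (by positivity) (by positivity)]
    linear_combination key
  unfold Cc
  symm
  calc Real.sqrt ((a-t)^5) * (Real.sqrt (4*a*(xlo a t)^3*(xro a t - xlo a t))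
        / (2*Real.pi*t*(xlo a t)*((xlo a t)^2 + (3*a-3*t)*(xlo a t))))
      = Real.sqrt ((a-t)^5 * (4*a*(xlo a t)^3*(xro a t - xlo a t)))
        / (2*Real.pi*t*(xlo a t)*((xlo a t)^2 + (3*a-3*t)*(xlo a t))) := by
        rw [Real.sqrt_mul (by positivity : (0:ℝ) ≤ (a-t)^5), mul_div_assoc]
    _ = Real.sqrt ((a-t)^5 * (4*a*(xlo a t)^3*(xro a t - xlo a t)))
        / Real.sqrt ((2*Real.pi*t*(xlo a t)*((xlo a t)^2 + (3*a-3*t)*(xlo a t)))^2) := by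
        rw [Real.sqrt_sq hd0.le]
    _ = Real.sqrt ((a-t)^5 * (4*a*(xlo a t)^3*(xro a t - xlo a t))
        / (2*Real.pi*t*(xlo a t)*((xlo a t)^2 + (3*a-3*t)*(xlo a t)))^2) :=
        (Real.sqrt_div (mul_nonneg (by positivity) hA0) _).symm
    _ = Real.sqrt (h t) := by rw [hfrac]

theorem stmt_16 (a : ℝ) (ha : 0 < a)
    (xL : ℝ → ℝ)
    (hxL : ∀ t, xL t = (8*a^2 + 20*a*t - t^2 - Real.sqrt t * (8*a+t) ^ ((3:ℝ)/2))/(8*a)) :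
    ∃ C : ℝ → ℝ,
      (∀ t : ℝ, 0 < t → t < a →
        0 < C t ∧
        Filter.Tendsto (fun x : ℝ => rho x 1 t a / Real.sqrt (x - xL t))
          (nhdsWithin (xL t) (Set.Ioi (xL t))) (nhds (C t)))
      ∧ Filter.Tendsto (fun t : ℝ => (a - t) ^ ((5:ℝ)/2) * C t)
          (nhdsWithin a (Set.Ioo 0 a)) (nhds (9*a/(4*Real.pi))) := by
  refine ⟨Cc a, fun t ht hta => ?_, part2 ha⟩
  have hxx : xL t = xlo a t := by rw [hxL]; rfl
  rw [hxx]
  exact part1 ha ht hta
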